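/- Fix β real with 0 < |β| < 1, α = √(1−β²), and x₁, x₂ ∈ ℝ. Let B(x; β, x₁, x₂) = 4·arctan(β sin(α x₁)/(α cosh(β(x+x₂)))) and Bₜ(x; β, x₁, x₂) = 4α²β cos(α x₁) cosh(β(x+x₂))/(α² cosh²(β(x+x₂)) + β² sin²(α x₁)), and write B′ = ∂ₓB, B_{t,1} = ∂_{x₁}Bₜ, B_{t,2} = ∂_{x₂}Bₜ. Then: (a) when x₂ = 0, the functions x ↦ Bₜ(x) and x ↦ B_{t,1}(x) are even, and the functions x ↦ B′(x) and x ↦ B_{t,2}(x) are odd; (b) for all x₁, x₂ ∈ ℝ, the products Bₜ·B′ and B_{t,1}·B_{t,2} are integrable over ℝ and ∫_ℝ Bₜ(x) B′(x) dx = 0 and ∫_ℝ B_{t,1}(x) B_{t,2}(x) dx = 0. -/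

import Mathlib

open MeasureTheory Set


private lemma my_exp_le_two_cosh (t : ℝ) : Real.exp |t| ≤ 2 * Real.cosh t := by
  rw [Real.cosh_eq]
  rcases abs_cases t with ⟨h, _⟩ | ⟨h, _⟩ <;> rw [h] <;>
    nlinarith [Real.exp_pos t, Real.exp_pos (-t)]

private lemma my_integrable_exp_neg_abs {b : ℝ} (hb : 0 < b) :
    Integrable (fun x : ℝ => Real.exp (-b * |x|)) := by
  have h1 : IntegrableOn (fun x : ℝ => Real.exp (-b * |x|)) (Ici 0) := by
    rw [integrableOn_Ici_iff_integrableOn_Ioi]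
    exact (exp_neg_integrableOn_Ioi 0 hb).congr_fun
      (fun x hx => by rw [abs_of_pos hx]) measurableSet_Ioi
  have h2 : IntegrableOn (fun x : ℝ => Real.exp (-b * |x|)) (Iio 0) := by
    have hmp : MeasurePreserving (fun x : ℝ => -x) volume volume :=
      Measure.measurePreserving_neg volume
    have hemb : MeasurableEmbedding (fun x : ℝ => -x) :=
      (Homeomorph.neg ℝ).isClosedEmbedding.measurableEmbedding
    rw [← hmp.integrableOn_comp_preimage hemb
      (f := fun x : ℝ => Real.exp (-b * |x|)) (s := Iio 0)]
    have hpre : (fun x : ℝ => -x) ⁻¹' (Iio 0) = Ioi 0 := by ext x; simp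
    rw [hpre]
    simp only [Function.comp_def, abs_neg]
    exact h1.mono_set Ioi_subset_Ici_self
  rw [← integrableOn_univ, ← Iio_union_Ici (a := (0:ℝ))]
  exact h2.union h1

private lemma my_integrable_of_cosh_sq_bound (β x₂ C : ℝ) (hβ : β ≠ 0) (f : ℝ → ℝ)
    (hf : AEStronglyMeasurable f volume)
    (hbound : ∀ x, |f x| ≤ C / Real.cosh (β * (x + x₂)) ^ 2) : Integrable f := by
  have hC : 0 ≤ C := by
    have h0 := (abs_nonneg (f 0)).trans (hbound 0)
    have hc := Real.cosh_pos (β * (0 + x₂))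
    by_contra hneg
    push_neg at hneg
    have : C / Real.cosh (β * (0 + x₂)) ^ 2 < 0 := div_neg_of_neg_of_pos hneg (by positivity)
    linarith
  have hInt : Integrable (fun x : ℝ => (4*C) * Real.exp (-(2*|β|) * |x + x₂|)) := by
    exact ((my_integrable_exp_neg_abs (by positivity : (0:ℝ) < 2*|β|)).comp_add_right x₂).const_mul _
  refine Integrable.mono' hInt hf ?_
  filter_upwards with x
  rw [Real.norm_eq_abs]
  refine (hbound x).trans ?_
  set t := β * (x + x₂) with ht
  have h1 : Real.exp |t| ≤ 2 * Real.cosh t := my_exp_le_two_cosh t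
  have h2 : Real.exp (2*|t|) ≤ 4 * Real.cosh t ^ 2 := by
    rw [two_mul, Real.exp_add]
    nlinarith [Real.exp_pos |t|, Real.cosh_pos t]
  have h3 : C / Real.cosh t ^ 2 ≤ 4*C / Real.exp (2*|t|) := by
    rw [show C / Real.cosh t ^ 2 = 4*C / (4 * Real.cosh t ^ 2) by
      rw [mul_div_mul_left _ _ (by norm_num : (4:ℝ) ≠ 0)]]
    exact div_le_div_of_nonneg_left (by positivity) (Real.exp_pos _) h2
  refine h3.trans (le_of_eq ?_)
  rw [div_eq_mul_inv, ← Real.exp_neg]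
  congr 1
  rw [ht, abs_mul]
  ring

private lemma my_integral_zero_of_odd_shift (f : ℝ → ℝ) (x₂ : ℝ)
    (hodd : ∀ t : ℝ, f (-t + -x₂) = - f (t + -x₂)) : ∫ x : ℝ, f x = 0 := by
  have h1 : ∫ x : ℝ, f x = ∫ t : ℝ, f (t + -x₂) := (integral_add_right_eq_self f (-x₂)).symm
  have h2 : ∫ t : ℝ, f (t + -x₂) = ∫ t : ℝ, f (-t + -x₂) :=
    (integral_neg_eq_self (fun t : ℝ => f (t + -x₂)) volume).symm
  have h3 : ∫ t : ℝ, f (-t + -x₂) = - ∫ t : ℝ, f (t + -x₂) := by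
    simp_rw [hodd]
    exact integral_neg _
  have := h2.trans h3
  linarith [h1, this]

private lemma my_hasDerivAt_B (α β x₁ x₂ : ℝ) (hα : 0 < α) (x : ℝ) :
    HasDerivAt (fun y : ℝ =>
        4 * Real.arctan (β * Real.sin (α * x₁) / (α * Real.cosh (β * (y + x₂)))))
      (-(4 * α * β ^ 2 * Real.sin (α * x₁)) * Real.sinh (β * (x + x₂)) /
        (α ^ 2 * Real.cosh (β * (x + x₂)) ^ 2 + β ^ 2 * Real.sin (α * x₁) ^ 2)) x := by
  have hc := Real.cosh_pos (β * (x + x₂))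
  have hinner : HasDerivAt (fun y : ℝ => β * (y + x₂)) β x := by
    simpa using ((hasDerivAt_id x).add_const x₂).const_mul β
  have hcosh : HasDerivAt (fun y : ℝ => Real.cosh (β * (y + x₂)))
      (Real.sinh (β * (x + x₂)) * β) x := (Real.hasDerivAt_cosh _).comp x hinner
  have hden : HasDerivAt (fun y : ℝ => α * Real.cosh (β * (y + x₂)))
      (α * (Real.sinh (β * (x + x₂)) * β)) x := hcosh.const_mul α
  have hne : α * Real.cosh (β * (x + x₂)) ≠ 0 := by positivity
  have hq : HasDerivAt
      (fun y : ℝ => β * Real.sin (α * x₁) / (α * Real.cosh (β * (y + x₂))))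
      ((0 * (α * Real.cosh (β * (x + x₂))) -
          β * Real.sin (α * x₁) * (α * (Real.sinh (β * (x + x₂)) * β))) /
        (α * Real.cosh (β * (x + x₂))) ^ 2) x :=
    (hasDerivAt_const x (β * Real.sin (α * x₁))).div hden hne
  have harc := (Real.hasDerivAt_arctan
      (β * Real.sin (α * x₁) / (α * Real.cosh (β * (x + x₂))))).comp x hq
  have h4 : HasDerivAt (fun y : ℝ =>
      4 * Real.arctan (β * Real.sin (α * x₁) / (α * Real.cosh (β * (y + x₂)))))
      (4 * (1 / (1 + (β * Real.sin (α * x₁) / (α * Real.cosh (β * (x + x₂)))) ^ 2) *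
        ((0 * (α * Real.cosh (β * (x + x₂))) -
            β * Real.sin (α * x₁) * (α * (Real.sinh (β * (x + x₂)) * β))) /
          (α * Real.cosh (β * (x + x₂))) ^ 2))) x := harc.const_mul 4
  convert h4 using 1
  have h1 : (0:ℝ) < 1 + (β * Real.sin (α * x₁) / (α * Real.cosh (β * (x + x₂)))) ^ 2 := by
    positivity
  have hD : (0:ℝ) < α ^ 2 * Real.cosh (β * (x + x₂)) ^ 2 + β ^ 2 * Real.sin (α * x₁) ^ 2 := by
    positivity
  field_simp
  ring

private lemma my_hasDerivAt_Bt1 (α β x₂ : ℝ) (hα : 0 < α) (x x₁ : ℝ) :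
    HasDerivAt (fun y₁ : ℝ =>
        4 * α ^ 2 * β * Real.cos (α * y₁) * Real.cosh (β * (x + x₂)) /
          (α ^ 2 * Real.cosh (β * (x + x₂)) ^ 2 + β ^ 2 * Real.sin (α * y₁) ^ 2))
      ((4 * α ^ 2 * β * (-Real.sin (α * x₁) * α) * Real.cosh (β * (x + x₂)) *
          (α ^ 2 * Real.cosh (β * (x + x₂)) ^ 2 + β ^ 2 * Real.sin (α * x₁) ^ 2) -
        4 * α ^ 2 * β * Real.cos (α * x₁) * Real.cosh (β * (x + x₂)) *
          (β ^ 2 * (2 * Real.sin (α * x₁) * (Real.cos (α * x₁) * α)))) /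
        (α ^ 2 * Real.cosh (β * (x + x₂)) ^ 2 + β ^ 2 * Real.sin (α * x₁) ^ 2) ^ 2) x₁ := by
  have hc := Real.cosh_pos (β * (x + x₂))
  have hinner : HasDerivAt (fun y : ℝ => α * y) α x₁ := by
    simpa using (hasDerivAt_id x₁).const_mul α
  have hsin : HasDerivAt (fun y : ℝ => Real.sin (α * y)) (Real.cos (α * x₁) * α) x₁ :=
    (Real.hasDerivAt_sin _).comp x₁ hinner
  have hcos : HasDerivAt (fun y : ℝ => Real.cos (α * y)) (-Real.sin (α * x₁) * α) x₁ :=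
    (Real.hasDerivAt_cos _).comp x₁ hinner
  have hnum : HasDerivAt (fun y : ℝ =>
      4 * α ^ 2 * β * Real.cos (α * y) * Real.cosh (β * (x + x₂)))
      (4 * α ^ 2 * β * (-Real.sin (α * x₁) * α) * Real.cosh (β * (x + x₂))) x₁ := by
    have := (hcos.const_mul (4 * α ^ 2 * β)).mul_const (Real.cosh (β * (x + x₂)))
    convert this using 2 <;> ring
  have hsin2 : HasDerivAt (fun y : ℝ => Real.sin (α * y) ^ 2)
      (2 * Real.sin (α * x₁) * (Real.cos (α * x₁) * α)) x₁ := by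
    have := hsin.fun_pow 2
    refine this.congr_deriv ?_
    push_cast
    ring
  have hden : HasDerivAt (fun y : ℝ =>
      α ^ 2 * Real.cosh (β * (x + x₂)) ^ 2 + β ^ 2 * Real.sin (α * y) ^ 2)
      (β ^ 2 * (2 * Real.sin (α * x₁) * (Real.cos (α * x₁) * α))) x₁ :=
    (hsin2.const_mul (β ^ 2)).const_add (α ^ 2 * Real.cosh (β * (x + x₂)) ^ 2)
  have hne : α ^ 2 * Real.cosh (β * (x + x₂)) ^ 2 + β ^ 2 * Real.sin (α * x₁) ^ 2 ≠ 0 := by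
    positivity
  exact hnum.div hden hne

private lemma my_hasDerivAt_Bt2 (α β x₁ : ℝ) (hα : 0 < α) (x x₂ : ℝ) :
    HasDerivAt (fun y₂ : ℝ =>
        4 * α ^ 2 * β * Real.cos (α * x₁) * Real.cosh (β * (x + y₂)) /
          (α ^ 2 * Real.cosh (β * (x + y₂)) ^ 2 + β ^ 2 * Real.sin (α * x₁) ^ 2))
      ((4 * α ^ 2 * β * Real.cos (α * x₁) * (Real.sinh (β * (x + x₂)) * β) *
          (α ^ 2 * Real.cosh (β * (x + x₂)) ^ 2 + β ^ 2 * Real.sin (α * x₁) ^ 2) -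
        4 * α ^ 2 * β * Real.cos (α * x₁) * Real.cosh (β * (x + x₂)) *
          (α ^ 2 * (2 * Real.cosh (β * (x + x₂)) * (Real.sinh (β * (x + x₂)) * β)))) /
        (α ^ 2 * Real.cosh (β * (x + x₂)) ^ 2 + β ^ 2 * Real.sin (α * x₁) ^ 2) ^ 2) x₂ := by
  have hc := Real.cosh_pos (β * (x + x₂))
  have hinner : HasDerivAt (fun y : ℝ => β * (x + y)) β x₂ := by
    simpa using ((hasDerivAt_id x₂).const_add x).const_mul β
  have hcosh : HasDerivAt (fun y : ℝ => Real.cosh (β * (x + y)))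
      (Real.sinh (β * (x + x₂)) * β) x₂ := (Real.hasDerivAt_cosh _).comp x₂ hinner
  have hnum : HasDerivAt (fun y : ℝ =>
      4 * α ^ 2 * β * Real.cos (α * x₁) * Real.cosh (β * (x + y)))
      (4 * α ^ 2 * β * Real.cos (α * x₁) * (Real.sinh (β * (x + x₂)) * β)) x₂ := by
    have := hcosh.const_mul (4 * α ^ 2 * β * Real.cos (α * x₁))
    convert this using 2 <;> ring
  have hcosh2 : HasDerivAt (fun y : ℝ => Real.cosh (β * (x + y)) ^ 2)
      (2 * Real.cosh (β * (x + x₂)) * (Real.sinh (β * (x + x₂)) * β)) x₂ := by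
    have := hcosh.fun_pow 2
    refine this.congr_deriv ?_
    push_cast
    ring
  have hden : HasDerivAt (fun y : ℝ =>
      α ^ 2 * Real.cosh (β * (x + y)) ^ 2 + β ^ 2 * Real.sin (α * x₁) ^ 2)
      (α ^ 2 * (2 * Real.cosh (β * (x + x₂)) * (Real.sinh (β * (x + x₂)) * β))) x₂ :=
    (hcosh2.const_mul (α ^ 2)).add_const (β ^ 2 * Real.sin (α * x₁) ^ 2)
  have hne : α ^ 2 * Real.cosh (β * (x + x₂)) ^ 2 + β ^ 2 * Real.sin (α * x₁) ^ 2 ≠ 0 := by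
    positivity
  exact hnum.div hden hne

private lemma my_abs_sinh_le_cosh (u : ℝ) : |Real.sinh u| ≤ Real.cosh u := by
  nlinarith [Real.cosh_sq u, sq_abs (Real.sinh u), abs_nonneg (Real.sinh u),
    Real.cosh_pos u]

private lemma my_bound_Bt (α β : ℝ) (hα : 0 < α) (u v : ℝ) :
    |4 * α ^ 2 * β * Real.cos v * Real.cosh u /
        (α ^ 2 * Real.cosh u ^ 2 + β ^ 2 * Real.sin v ^ 2)| ≤ 4 * |β| / Real.cosh u := by
  have hc0 := Real.cosh_pos u
  have hc1 := Real.one_le_cosh u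
  have hco : |Real.cos v| ≤ 1 := abs_le.mpr ⟨Real.neg_one_le_cos v, Real.cos_le_one v⟩
  have hD0 : (0:ℝ) < α ^ 2 * Real.cosh u ^ 2 + β ^ 2 * Real.sin v ^ 2 := by positivity
  rw [abs_div, abs_of_pos hD0, div_le_div_iff₀ hD0 hc0]
  have habs : |4 * α ^ 2 * β * Real.cos v * Real.cosh u|
      = 4 * α ^ 2 * |β| * |Real.cos v| * Real.cosh u := by
    simp only [abs_mul, abs_pow, abs_of_pos hα, abs_of_pos hc0]; norm_num
  rw [habs]
  nlinarith [abs_nonneg β, abs_nonneg (Real.cos v), sq_nonneg (Real.sin v),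
    mul_nonneg (mul_nonneg (by positivity : (0:ℝ) ≤ 4 * α ^ 2 * |β|)
      (sub_nonneg.mpr hco)) (by positivity : (0:ℝ) ≤ Real.cosh u ^ 2),
    mul_nonneg (abs_nonneg β) (sq_nonneg (β * Real.sin v))]

private lemma my_bound_B' (α β : ℝ) (hα : 0 < α) (u v : ℝ) :
    |(-(4 * α * β ^ 2 * Real.sin v)) * Real.sinh u /
        (α ^ 2 * Real.cosh u ^ 2 + β ^ 2 * Real.sin v ^ 2)|
      ≤ 4 * β ^ 2 / (α * Real.cosh u) := by
  have hc0 := Real.cosh_pos u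
  have hc1 := Real.one_le_cosh u
  have hsh := my_abs_sinh_le_cosh u
  have hsa : |Real.sin v| ≤ 1 := abs_le.mpr ⟨Real.neg_one_le_sin v, Real.sin_le_one v⟩
  have hD0 : (0:ℝ) < α ^ 2 * Real.cosh u ^ 2 + β ^ 2 * Real.sin v ^ 2 := by positivity
  rw [abs_div, abs_of_pos hD0, div_le_div_iff₀ hD0 (by positivity : (0:ℝ) < α * Real.cosh u)]
  have habs : |(-(4 * α * β ^ 2 * Real.sin v)) * Real.sinh u|
      = 4 * α * β ^ 2 * |Real.sin v| * |Real.sinh u| := by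
    simp only [abs_mul, abs_neg, abs_pow, abs_of_pos hα, sq_abs]; norm_num
  rw [habs]
  nlinarith [abs_nonneg (Real.sin v), abs_nonneg (Real.sinh u), sq_nonneg (Real.sin v),
    sq_nonneg β,
    mul_nonneg (mul_nonneg (by positivity : (0:ℝ) ≤ 4 * α * β ^ 2)
      (sub_nonneg.mpr hsa)) (mul_nonneg (abs_nonneg (Real.sinh u)) (by positivity : (0:ℝ) ≤ α * Real.cosh u)),
    mul_nonneg (mul_nonneg (by positivity : (0:ℝ) ≤ 4 * α * β ^ 2)
      (sub_nonneg.mpr hsh)) (by positivity : (0:ℝ) ≤ α * Real.cosh u),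
    mul_nonneg (sq_nonneg β) (sq_nonneg (β * Real.sin v))]

private lemma my_bound_E1 (α β : ℝ) (hα : 0 < α) (u v : ℝ) :
    |(4 * α ^ 2 * β * (-Real.sin v * α) * Real.cosh u *
          (α ^ 2 * Real.cosh u ^ 2 + β ^ 2 * Real.sin v ^ 2) -
        4 * α ^ 2 * β * Real.cos v * Real.cosh u *
          (β ^ 2 * (2 * Real.sin v * (Real.cos v * α)))) /
        (α ^ 2 * Real.cosh u ^ 2 + β ^ 2 * Real.sin v ^ 2) ^ 2|
      ≤ (4 * α ^ 2 * |β| + 8 * |β| * β ^ 2) / (α * Real.cosh u) := by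
  have hc0 := Real.cosh_pos u
  have hc1 := Real.one_le_cosh u
  have hsa : |Real.sin v| ≤ 1 := abs_le.mpr ⟨Real.neg_one_le_sin v, Real.sin_le_one v⟩
  have hco : |Real.cos v| ≤ 1 := abs_le.mpr ⟨Real.neg_one_le_cos v, Real.cos_le_one v⟩
  set c := Real.cosh u with hc
  set D := α ^ 2 * c ^ 2 + β ^ 2 * Real.sin v ^ 2 with hD
  have hD0 : (0:ℝ) < D := by positivity
  have hD1 : α ^ 2 * c ^ 2 ≤ D := le_add_of_nonneg_right (by positivity)
  have hc2 : (1:ℝ) ≤ c ^ 2 := by nlinarith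
  have hD2 : α ^ 4 * c ^ 2 ≤ D ^ 2 := by
    have m := mul_le_mul hD1 hD1 (by positivity : (0:ℝ) ≤ α ^ 2 * c ^ 2) hD0.le
    have m2 : 0 ≤ α ^ 4 * c ^ 2 * (c ^ 2 - 1) := mul_nonneg (by positivity) (by linarith)
    nlinarith [m, m2]
  rw [abs_div, abs_of_pos (by positivity : (0:ℝ) < D ^ 2),
    div_le_div_iff₀ (by positivity) (by positivity : (0:ℝ) < α * c)]
  have e1 : |4 * α ^ 2 * β * (-Real.sin v * α) * c * D|
      = 4 * α ^ 3 * |β| * |Real.sin v| * c * D := by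
    simp only [abs_mul, abs_neg, abs_pow, abs_of_pos hα, abs_of_pos hc0, abs_of_pos hD0]
    rw [show |(4:ℝ)| = 4 from by norm_num]
    ring
  have e2 : |4 * α ^ 2 * β * Real.cos v * c * (β ^ 2 * (2 * Real.sin v * (Real.cos v * α)))|
      = 8 * α ^ 3 * |β| * β ^ 2 * |Real.sin v| * (|Real.cos v| * |Real.cos v|) * c := by
    simp only [abs_mul, abs_pow, abs_of_pos hα, abs_of_pos hc0]
    rw [show |(4:ℝ)| = 4 from by norm_num, show |(2:ℝ)| = 2 from by norm_num, ← sq_abs β]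
    ring
  have hnum : |4 * α ^ 2 * β * (-Real.sin v * α) * c * D -
      4 * α ^ 2 * β * Real.cos v * c * (β ^ 2 * (2 * Real.sin v * (Real.cos v * α)))|
      ≤ 4 * α ^ 3 * |β| * c * D + 8 * α ^ 3 * |β| * β ^ 2 * c := by
    refine (abs_sub _ _).trans ?_
    rw [e1, e2]
    have b1 : 4 * α ^ 3 * |β| * |Real.sin v| * c * D ≤ 4 * α ^ 3 * |β| * c * D := by
      nlinarith [mul_nonneg (mul_nonneg (by positivity : (0:ℝ) ≤ 4 * α ^ 3 * |β|)
        (sub_nonneg.mpr hsa)) (mul_nonneg hc0.le hD0.le)]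
    have b2 : 8 * α ^ 3 * |β| * β ^ 2 * |Real.sin v| * (|Real.cos v| * |Real.cos v|) * c
        ≤ 8 * α ^ 3 * |β| * β ^ 2 * c := by
      have h1 : |Real.sin v| * (|Real.cos v| * |Real.cos v|) ≤ 1 := by
        nlinarith [abs_nonneg (Real.sin v), abs_nonneg (Real.cos v)]
      nlinarith [mul_nonneg (mul_nonneg (by positivity : (0:ℝ) ≤ 8 * α ^ 3 * |β| * β ^ 2)
          (sub_nonneg.mpr h1)) hc0.le]
    linarith
  have hnum' := mul_le_mul_of_nonneg_right hnum (by positivity : (0:ℝ) ≤ α * c)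
  refine hnum'.trans ?_
  have f1 : 0 ≤ 4 * α ^ 2 * |β| * D * (D - α ^ 2 * c ^ 2) :=
    mul_nonneg (by positivity) (sub_nonneg.mpr hD1)
  have f2 : 0 ≤ 8 * |β| * β ^ 2 * (D ^ 2 - α ^ 4 * c ^ 2) :=
    mul_nonneg (by positivity) (sub_nonneg.mpr hD2)
  nlinarith [f1, f2]

private lemma my_bound_E2 (α β : ℝ) (hα : 0 < α) (u v : ℝ) :
    |(4 * α ^ 2 * β * Real.cos v * (Real.sinh u * β) *
          (α ^ 2 * Real.cosh u ^ 2 + β ^ 2 * Real.sin v ^ 2) -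
        4 * α ^ 2 * β * Real.cos v * Real.cosh u *
          (α ^ 2 * (2 * Real.cosh u * (Real.sinh u * β)))) /
        (α ^ 2 * Real.cosh u ^ 2 + β ^ 2 * Real.sin v ^ 2) ^ 2|
      ≤ 12 * β ^ 2 / Real.cosh u := by
  have hc0 := Real.cosh_pos u
  have hc1 := Real.one_le_cosh u
  have hsh := my_abs_sinh_le_cosh u
  have hco : |Real.cos v| ≤ 1 := abs_le.mpr ⟨Real.neg_one_le_cos v, Real.cos_le_one v⟩
  set c := Real.cosh u with hc
  set D := α ^ 2 * c ^ 2 + β ^ 2 * Real.sin v ^ 2 with hD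
  have hD0 : (0:ℝ) < D := by positivity
  have hD1 : α ^ 2 * c ^ 2 ≤ D := le_add_of_nonneg_right (by positivity)
  have hD2 : α ^ 4 * c ^ 4 ≤ D ^ 2 := by
    nlinarith [mul_le_mul hD1 hD1 (by positivity : (0:ℝ) ≤ α ^ 2 * c ^ 2) hD0.le]
  rw [abs_div, abs_of_pos (by positivity : (0:ℝ) < D ^ 2),
    div_le_div_iff₀ (by positivity) hc0]
  have e1 : |4 * α ^ 2 * β * Real.cos v * (Real.sinh u * β) * D|
      = 4 * α ^ 2 * β ^ 2 * |Real.cos v| * |Real.sinh u| * D := by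
    simp only [abs_mul, abs_pow, abs_of_pos hα, abs_of_pos hD0]
    rw [show |(4:ℝ)| = 4 from by norm_num, ← sq_abs β]
    ring
  have e2 : |4 * α ^ 2 * β * Real.cos v * c * (α ^ 2 * (2 * c * (Real.sinh u * β)))|
      = 8 * α ^ 4 * β ^ 2 * |Real.cos v| * c ^ 2 * |Real.sinh u| := by
    simp only [abs_mul, abs_pow, abs_of_pos hα, abs_of_pos hc0]
    rw [show |(4:ℝ)| = 4 from by norm_num, show |(2:ℝ)| = 2 from by norm_num, ← sq_abs β]
    ring
  have hnum : |4 * α ^ 2 * β * Real.cos v * (Real.sinh u * β) * D -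
      4 * α ^ 2 * β * Real.cos v * c * (α ^ 2 * (2 * c * (Real.sinh u * β)))|
      ≤ 4 * α ^ 2 * β ^ 2 * c * D + 8 * α ^ 4 * β ^ 2 * c ^ 3 := by
    refine (abs_sub _ _).trans ?_
    rw [e1, e2]
    have hcs : |Real.cos v| * |Real.sinh u| ≤ 1 * c :=
      mul_le_mul hco hsh (abs_nonneg _) zero_le_one
    have b1 : 4 * α ^ 2 * β ^ 2 * |Real.cos v| * |Real.sinh u| * D
        ≤ 4 * α ^ 2 * β ^ 2 * c * D := by
      nlinarith [mul_le_mul_of_nonneg_right (mul_le_mul_of_nonneg_left hcs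
        (by positivity : (0:ℝ) ≤ 4 * α ^ 2 * β ^ 2)) hD0.le]
    have b2 : 8 * α ^ 4 * β ^ 2 * |Real.cos v| * c ^ 2 * |Real.sinh u|
        ≤ 8 * α ^ 4 * β ^ 2 * c ^ 3 := by
      nlinarith [mul_le_mul_of_nonneg_left hcs
        (by positivity : (0:ℝ) ≤ 8 * α ^ 4 * β ^ 2 * c ^ 2)]
    linarith
  have hnum' := mul_le_mul_of_nonneg_right hnum hc0.le
  refine hnum'.trans ?_
  have f1 : 0 ≤ 4 * β ^ 2 * D * (D - α ^ 2 * c ^ 2) :=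
    mul_nonneg (by positivity) (sub_nonneg.mpr hD1)
  have f2 : 0 ≤ 8 * β ^ 2 * (D ^ 2 - α ^ 4 * c ^ 4) :=
    mul_nonneg (by positivity) (sub_nonneg.mpr hD2)
  nlinarith [f1, f2]

/-- **Parity and orthogonality for the breather profile (Appendix B.1).**
For the breather profile `B(x;β,x₁,x₂)` and its time-derivative profile `Bₜ(x;β,x₁,x₂)`:
(a) when `x₂ = 0`, `x ↦ Bₜ` and `x ↦ ∂_{x₁}Bₜ` are even while `x ↦ ∂ₓB` and
`x ↦ ∂_{x₂}Bₜ` are odd; (b) for all `x₁, x₂`, the products `Bₜ·∂ₓB` and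
`∂_{x₁}Bₜ·∂_{x₂}Bₜ` are integrable over `ℝ` with vanishing integrals. -/
theorem breather_parity_orthogonality (β : ℝ) (hβ0 : 0 < |β|) (hβ1 : |β| < 1)
    (α : ℝ) (hα : α = Real.sqrt (1 - β ^ 2))
    (B Bt : ℝ → ℝ → ℝ → ℝ)
    (hB : ∀ x y₁ y₂ : ℝ, B x y₁ y₂
      = 4 * Real.arctan (β * Real.sin (α * y₁) / (α * Real.cosh (β * (x + y₂)))))
    (hBt : ∀ x y₁ y₂ : ℝ, Bt x y₁ y₂
      = 4 * α ^ 2 * β * Real.cos (α * y₁) * Real.cosh (β * (x + y₂))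
          / (α ^ 2 * (Real.cosh (β * (x + y₂))) ^ 2 + β ^ 2 * (Real.sin (α * y₁)) ^ 2)) :
    -- (a) parity at x₂ = 0
    (∀ x₁ x : ℝ, Bt (-x) x₁ 0 = Bt x x₁ 0) ∧
    (∀ x₁ x : ℝ, deriv (fun y₁ => Bt (-x) y₁ 0) x₁ = deriv (fun y₁ => Bt x y₁ 0) x₁) ∧
    (∀ x₁ x : ℝ, deriv (fun y => B y x₁ 0) (-x) = -deriv (fun y => B y x₁ 0) x) ∧
    (∀ x₁ x : ℝ, deriv (fun y₂ => Bt (-x) x₁ y₂) 0 = -deriv (fun y₂ => Bt x x₁ y₂) 0) ∧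
    -- (b) orthogonality for all shifts
    (∀ x₁ x₂ : ℝ,
      Integrable (fun x : ℝ => Bt x x₁ x₂ * deriv (fun y => B y x₁ x₂) x) ∧
      Integrable (fun x : ℝ =>
        deriv (fun y₁ => Bt x y₁ x₂) x₁ * deriv (fun y₂ => Bt x x₁ y₂) x₂) ∧
      (∫ x : ℝ, Bt x x₁ x₂ * deriv (fun y => B y x₁ x₂) x) = 0 ∧
      (∫ x : ℝ, deriv (fun y₁ => Bt x y₁ x₂) x₁ * deriv (fun y₂ => Bt x x₁ y₂) x₂) = 0) := by
  have hb2 : β ^ 2 < 1 := by rw [← sq_abs]; nlinarith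
  have hα0 : 0 < α := by rw [hα]; exact Real.sqrt_pos.mpr (by linarith)
  have hβne : β ≠ 0 := fun h => by simp [h] at hβ0
  refine ⟨?_, ?_, ?_, ?_, ?_⟩
  · intro x₁ x
    rw [hBt, hBt, add_zero, add_zero, mul_neg, Real.cosh_neg]
  · intro x₁ x
    congr 1
    funext y₁
    rw [hBt, hBt, add_zero, add_zero, mul_neg, Real.cosh_neg]
  · intro x₁ x
    have h2 : (fun y : ℝ => B (-y) x₁ 0) = (fun y => B y x₁ 0) :=
      funext fun y => by rw [hB, hB, add_zero, add_zero, mul_neg, Real.cosh_neg]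
    have h3 := deriv_comp_neg (f := fun y => B y x₁ 0) (x := x)
    rw [h2] at h3
    linarith
  · intro x₁ x
    have h1 : (fun y₂ : ℝ => Bt (-x) x₁ y₂) = (fun y₂ => Bt x x₁ (-y₂)) :=
      funext fun y₂ => by
        rw [hBt, hBt, show β * (-x + y₂) = -(β * (x + -y₂)) by ring, Real.cosh_neg]
    rw [h1, deriv_comp_neg, neg_zero]
  · intro x₁ x₂
    have hDpos : ∀ x : ℝ, (0:ℝ) <
        α ^ 2 * Real.cosh (β * (x + x₂)) ^ 2 + β ^ 2 * Real.sin (α * x₁) ^ 2 :=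
      fun x => by positivity
    have hfB : (fun y : ℝ => B y x₁ x₂) = fun y : ℝ =>
        4 * Real.arctan (β * Real.sin (α * x₁) / (α * Real.cosh (β * (y + x₂)))) :=
      funext fun y => hB y x₁ x₂
    have hd1 : ∀ x : ℝ, deriv (fun y => B y x₁ x₂) x =
        -(4 * α * β ^ 2 * Real.sin (α * x₁)) * Real.sinh (β * (x + x₂)) /
          (α ^ 2 * Real.cosh (β * (x + x₂)) ^ 2 + β ^ 2 * Real.sin (α * x₁) ^ 2) := fun x => by
      rw [hfB]; exact (my_hasDerivAt_B α β x₁ x₂ hα0 x).deriv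
    have hd2 : ∀ x : ℝ, deriv (fun y₁ => Bt x y₁ x₂) x₁ =
        (4 * α ^ 2 * β * (-Real.sin (α * x₁) * α) * Real.cosh (β * (x + x₂)) *
            (α ^ 2 * Real.cosh (β * (x + x₂)) ^ 2 + β ^ 2 * Real.sin (α * x₁) ^ 2) -
          4 * α ^ 2 * β * Real.cos (α * x₁) * Real.cosh (β * (x + x₂)) *
            (β ^ 2 * (2 * Real.sin (α * x₁) * (Real.cos (α * x₁) * α)))) /
          (α ^ 2 * Real.cosh (β * (x + x₂)) ^ 2 + β ^ 2 * Real.sin (α * x₁) ^ 2) ^ 2 :=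
      fun x => by
        rw [show (fun y₁ : ℝ => Bt x y₁ x₂) = fun y₁ : ℝ =>
            4 * α ^ 2 * β * Real.cos (α * y₁) * Real.cosh (β * (x + x₂)) /
              (α ^ 2 * Real.cosh (β * (x + x₂)) ^ 2 + β ^ 2 * Real.sin (α * y₁) ^ 2) from
          funext fun y₁ => hBt x y₁ x₂]
        exact (my_hasDerivAt_Bt1 α β x₂ hα0 x x₁).deriv
    have hd3 : ∀ x : ℝ, deriv (fun y₂ => Bt x x₁ y₂) x₂ =
        (4 * α ^ 2 * β * Real.cos (α * x₁) * (Real.sinh (β * (x + x₂)) * β) *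
            (α ^ 2 * Real.cosh (β * (x + x₂)) ^ 2 + β ^ 2 * Real.sin (α * x₁) ^ 2) -
          4 * α ^ 2 * β * Real.cos (α * x₁) * Real.cosh (β * (x + x₂)) *
            (α ^ 2 * (2 * Real.cosh (β * (x + x₂)) * (Real.sinh (β * (x + x₂)) * β)))) /
          (α ^ 2 * Real.cosh (β * (x + x₂)) ^ 2 + β ^ 2 * Real.sin (α * x₁) ^ 2) ^ 2 :=
      fun x => by
        rw [show (fun y₂ : ℝ => Bt x x₁ y₂) = fun y₂ : ℝ =>
            4 * α ^ 2 * β * Real.cos (α * x₁) * Real.cosh (β * (x + y₂)) /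
              (α ^ 2 * Real.cosh (β * (x + y₂)) ^ 2 + β ^ 2 * Real.sin (α * x₁) ^ 2) from
          funext fun y₂ => hBt x x₁ y₂]
        exact (my_hasDerivAt_Bt2 α β x₁ hα0 x x₂).deriv
    have heq1 : (fun x : ℝ => Bt x x₁ x₂ * deriv (fun y => B y x₁ x₂) x) = fun x : ℝ =>
        4 * α ^ 2 * β * Real.cos (α * x₁) * Real.cosh (β * (x + x₂)) /
          (α ^ 2 * Real.cosh (β * (x + x₂)) ^ 2 + β ^ 2 * Real.sin (α * x₁) ^ 2) *
        (-(4 * α * β ^ 2 * Real.sin (α * x₁)) * Real.sinh (β * (x + x₂)) /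
          (α ^ 2 * Real.cosh (β * (x + x₂)) ^ 2 + β ^ 2 * Real.sin (α * x₁) ^ 2)) :=
      funext fun x => by rw [hBt, hd1]
    have heq2 : (fun x : ℝ =>
        deriv (fun y₁ => Bt x y₁ x₂) x₁ * deriv (fun y₂ => Bt x x₁ y₂) x₂) = fun x : ℝ =>
        (4 * α ^ 2 * β * (-Real.sin (α * x₁) * α) * Real.cosh (β * (x + x₂)) *
            (α ^ 2 * Real.cosh (β * (x + x₂)) ^ 2 + β ^ 2 * Real.sin (α * x₁) ^ 2) -
          4 * α ^ 2 * β * Real.cos (α * x₁) * Real.cosh (β * (x + x₂)) *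
            (β ^ 2 * (2 * Real.sin (α * x₁) * (Real.cos (α * x₁) * α)))) /
          (α ^ 2 * Real.cosh (β * (x + x₂)) ^ 2 + β ^ 2 * Real.sin (α * x₁) ^ 2) ^ 2 *
        ((4 * α ^ 2 * β * Real.cos (α * x₁) * (Real.sinh (β * (x + x₂)) * β) *
            (α ^ 2 * Real.cosh (β * (x + x₂)) ^ 2 + β ^ 2 * Real.sin (α * x₁) ^ 2) -
          4 * α ^ 2 * β * Real.cos (α * x₁) * Real.cosh (β * (x + x₂)) *
            (α ^ 2 * (2 * Real.cosh (β * (x + x₂)) * (Real.sinh (β * (x + x₂)) * β)))) /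
          (α ^ 2 * Real.cosh (β * (x + x₂)) ^ 2 + β ^ 2 * Real.sin (α * x₁) ^ 2) ^ 2) :=
      funext fun x => by rw [hd2, hd3]
    -- continuity
    have contc : Continuous fun x : ℝ => Real.cosh (β * (x + x₂)) :=
      Real.continuous_cosh.comp (continuous_const.mul (continuous_id.add continuous_const))
    have conts : Continuous fun x : ℝ => Real.sinh (β * (x + x₂)) :=
      Real.continuous_sinh.comp (continuous_const.mul (continuous_id.add continuous_const))
    have contD : Continuous fun x : ℝ =>
        α ^ 2 * Real.cosh (β * (x + x₂)) ^ 2 + β ^ 2 * Real.sin (α * x₁) ^ 2 :=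
      (continuous_const.mul (contc.pow 2)).add continuous_const
    have hDne : ∀ x : ℝ,
        α ^ 2 * Real.cosh (β * (x + x₂)) ^ 2 + β ^ 2 * Real.sin (α * x₁) ^ 2 ≠ 0 :=
      fun x => (hDpos x).ne'
    have hDne2 : ∀ x : ℝ,
        (α ^ 2 * Real.cosh (β * (x + x₂)) ^ 2 + β ^ 2 * Real.sin (α * x₁) ^ 2) ^ 2 ≠ 0 :=
      fun x => pow_ne_zero 2 (hDne x)
    have cont1 : Continuous fun x : ℝ =>
        4 * α ^ 2 * β * Real.cos (α * x₁) * Real.cosh (β * (x + x₂)) /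
          (α ^ 2 * Real.cosh (β * (x + x₂)) ^ 2 + β ^ 2 * Real.sin (α * x₁) ^ 2) *
        (-(4 * α * β ^ 2 * Real.sin (α * x₁)) * Real.sinh (β * (x + x₂)) /
          (α ^ 2 * Real.cosh (β * (x + x₂)) ^ 2 + β ^ 2 * Real.sin (α * x₁) ^ 2)) :=
      ((continuous_const.mul contc).div contD hDne).mul
        ((continuous_const.mul conts).div contD hDne)
    have cont2 : Continuous fun x : ℝ =>
        (4 * α ^ 2 * β * (-Real.sin (α * x₁) * α) * Real.cosh (β * (x + x₂)) *
            (α ^ 2 * Real.cosh (β * (x + x₂)) ^ 2 + β ^ 2 * Real.sin (α * x₁) ^ 2) -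
          4 * α ^ 2 * β * Real.cos (α * x₁) * Real.cosh (β * (x + x₂)) *
            (β ^ 2 * (2 * Real.sin (α * x₁) * (Real.cos (α * x₁) * α)))) /
          (α ^ 2 * Real.cosh (β * (x + x₂)) ^ 2 + β ^ 2 * Real.sin (α * x₁) ^ 2) ^ 2 *
        ((4 * α ^ 2 * β * Real.cos (α * x₁) * (Real.sinh (β * (x + x₂)) * β) *
            (α ^ 2 * Real.cosh (β * (x + x₂)) ^ 2 + β ^ 2 * Real.sin (α * x₁) ^ 2) -
          4 * α ^ 2 * β * Real.cos (α * x₁) * Real.cosh (β * (x + x₂)) *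
            (α ^ 2 * (2 * Real.cosh (β * (x + x₂)) * (Real.sinh (β * (x + x₂)) * β)))) /
          (α ^ 2 * Real.cosh (β * (x + x₂)) ^ 2 + β ^ 2 * Real.sin (α * x₁) ^ 2) ^ 2) := by
      apply Continuous.mul
      · exact Continuous.div
          ((((continuous_const.mul contc).mul contD)).sub
            ((continuous_const.mul contc).mul continuous_const))
          (contD.pow 2) hDne2
      · exact Continuous.div
          (((continuous_const.mul (conts.mul continuous_const)).mul contD).sub
            ((continuous_const.mul contc).mul
              (continuous_const.mul ((continuous_const.mul contc).mul
                (conts.mul continuous_const)))))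
          (contD.pow 2) hDne2
    -- bounds
    have hbound1 : ∀ x : ℝ,
        |4 * α ^ 2 * β * Real.cos (α * x₁) * Real.cosh (β * (x + x₂)) /
          (α ^ 2 * Real.cosh (β * (x + x₂)) ^ 2 + β ^ 2 * Real.sin (α * x₁) ^ 2) *
        (-(4 * α * β ^ 2 * Real.sin (α * x₁)) * Real.sinh (β * (x + x₂)) /
          (α ^ 2 * Real.cosh (β * (x + x₂)) ^ 2 + β ^ 2 * Real.sin (α * x₁) ^ 2))|
        ≤ (4 * |β|) * (4 * β ^ 2) / α / Real.cosh (β * (x + x₂)) ^ 2 := by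
      intro x
      have hc0 := Real.cosh_pos (β * (x + x₂))
      rw [abs_mul]
      refine (mul_le_mul (my_bound_Bt α β hα0 (β * (x + x₂)) (α * x₁))
        (my_bound_B' α β hα0 (β * (x + x₂)) (α * x₁)) (abs_nonneg _)
        (by positivity)).trans (le_of_eq ?_)
      field_simp
    have hbound2 : ∀ x : ℝ,
        |(4 * α ^ 2 * β * (-Real.sin (α * x₁) * α) * Real.cosh (β * (x + x₂)) *
            (α ^ 2 * Real.cosh (β * (x + x₂)) ^ 2 + β ^ 2 * Real.sin (α * x₁) ^ 2) -
          4 * α ^ 2 * β * Real.cos (α * x₁) * Real.cosh (β * (x + x₂)) *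
            (β ^ 2 * (2 * Real.sin (α * x₁) * (Real.cos (α * x₁) * α)))) /
          (α ^ 2 * Real.cosh (β * (x + x₂)) ^ 2 + β ^ 2 * Real.sin (α * x₁) ^ 2) ^ 2 *
        ((4 * α ^ 2 * β * Real.cos (α * x₁) * (Real.sinh (β * (x + x₂)) * β) *
            (α ^ 2 * Real.cosh (β * (x + x₂)) ^ 2 + β ^ 2 * Real.sin (α * x₁) ^ 2) -
          4 * α ^ 2 * β * Real.cos (α * x₁) * Real.cosh (β * (x + x₂)) *
            (α ^ 2 * (2 * Real.cosh (β * (x + x₂)) * (Real.sinh (β * (x + x₂)) * β)))) /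
          (α ^ 2 * Real.cosh (β * (x + x₂)) ^ 2 + β ^ 2 * Real.sin (α * x₁) ^ 2) ^ 2)|
        ≤ (4 * α ^ 2 * |β| + 8 * |β| * β ^ 2) * (12 * β ^ 2) / α /
            Real.cosh (β * (x + x₂)) ^ 2 := by
      intro x
      have hc0 := Real.cosh_pos (β * (x + x₂))
      rw [abs_mul]
      refine (mul_le_mul (my_bound_E1 α β hα0 (β * (x + x₂)) (α * x₁))
        (my_bound_E2 α β hα0 (β * (x + x₂)) (α * x₁)) (abs_nonneg _)
        (by positivity)).trans (le_of_eq ?_)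
      field_simp
    refine ⟨?_, ?_, ?_, ?_⟩
    · rw [heq1]
      exact my_integrable_of_cosh_sq_bound β x₂ _ hβne _ cont1.aestronglyMeasurable hbound1
    · rw [heq2]
      exact my_integrable_of_cosh_sq_bound β x₂ _ hβne _ cont2.aestronglyMeasurable hbound2
    · rw [heq1]
      apply my_integral_zero_of_odd_shift _ x₂
      intro t
      have e1 : β * (-t + -x₂ + x₂) = -(β * t) := by ring
      have e2 : β * (t + -x₂ + x₂) = β * t := by ring
      simp only [e1, e2, Real.cosh_neg, Real.sinh_neg]
      ring
    · rw [heq2]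
      apply my_integral_zero_of_odd_shift _ x₂
      intro t
      have e1 : β * (-t + -x₂ + x₂) = -(β * t) := by ring
      have e2 : β * (t + -x₂ + x₂) = β * t := by ring
      simp only [e1, e2, Real.cosh_neg, Real.sinh_neg]
      ring
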